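/- Fix n, p ∈ ℕ and α ∈ [0, 1/2). Let c be a uniformly random Boolean function from {0,1}^n to {0,1}, let x_1, …, x_p be i.i.d. uniform samples from {0,1}^n independent of c, and let T^c_p = ((x_1, c(x_1)), …, (x_p, c(x_p))). Then for every randomized estimator W, i.e., every map assigning to each element of ({0,1}^n × {0,1})^p a probability distribution over Boolean functions on {0,1}^n, it holds that P( W(T^c_p) ∈ B(c, α) ) ≤ (⌈α·2^n⌉ + 1) · 2^{ 2^n ( H(⌈α·2^n⌉ / 2^n) − 1 ) + p }, where the probability is over c, the samples, and the internal randomness of W. -/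

import Mathlib

open scoped Classical

/-- Binary entropy function `H(t) = -t log₂ t - (1-t) log₂ (1-t)`
(with the convention `H(0) = H(1) = 0`, automatic since `Real.logb 2 0 = 0`). -/
noncomputable def binEntropy2 (t : ℝ) : ℝ :=
  -t * Real.logb 2 t - (1 - t) * Real.logb 2 (1 - t)

/-- The set `B(c, α)` of Boolean functions on `{0,1}^n` differing from `c`
on at most `α·2^n` inputs. -/
noncomputable def ball (n : ℕ) (c : (Fin n → Bool) → Bool) (α : ℝ) :
    Finset ((Fin n → Bool) → Bool) :=
  Finset.univ.filter
    (fun c' => ((Finset.univ.filter (fun x : Fin n → Bool => c' x ≠ c x)).card : ℝ) ≤ α * 2 ^ n)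

/-- The training set `T^c_p = ((x_1, c(x_1)), …, (x_p, c(x_p)))`. -/
def trainSet (n p : ℕ) (c : (Fin n → Bool) → Bool) (x : Fin p → (Fin n → Bool)) :
    Fin p → ((Fin n → Bool) × Bool) :=
  fun i => (x i, c (x i))

/-- The probability, over a uniformly random Boolean function `c` on `{0,1}^n`, over `p`
i.i.d. uniform samples `x_1, …, x_p` from `{0,1}^n`, and over the internal randomness of
the randomized estimator `W`, that `W(T^c_p) ∈ B(c, α)`. -/
noncomputable def probEstimator (n p : ℕ) (α : ℝ)
    (W : (Fin p → ((Fin n → Bool) × Bool)) → PMF ((Fin n → Bool) → Bool)) : ℝ :=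
  (∑ c : (Fin n → Bool) → Bool, ∑ x : Fin p → (Fin n → Bool),
      ∑ c' ∈ ball n c α, ((W (trainSet n p c x)) c').toReal)
    / ((Fintype.card ((Fin n → Bool) → Bool) : ℝ) * (Fintype.card (Fin n → Bool) : ℝ) ^ p)

lemma binEntropy2_symm (t : ℝ) : binEntropy2 (1 - t) = binEntropy2 t := by
  unfold binEntropy2
  rw [sub_sub_cancel]
  ring

lemma choose_le_rpow (N j u : ℕ) (hj : j ≤ u) (hu : 2 * u ≤ N) :
    (N.choose j : ℝ) ≤ (2:ℝ) ^ ((N:ℝ) * binEntropy2 ((u:ℝ) / (N:ℝ))) := by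
  rcases Nat.eq_zero_or_pos u with rfl | hupos
  · have hj0 : j = 0 := Nat.le_zero.mp hj
    subst hj0
    simp [binEntropy2]
  · have hN : 0 < N := by omega
    have hNR : (0:ℝ) < N := by exact_mod_cast hN
    set t : ℝ := (u:ℝ) / (N:ℝ) with ht
    have ht0 : 0 < t := div_pos (by exact_mod_cast hupos) hNR
    have ht2 : t ≤ 1/2 := by
      rw [ht, div_le_div_iff₀ hNR (by norm_num)]
      have : (2:ℝ) * u ≤ N := by exact_mod_cast hu
      linarith
    have h1t : 0 < 1 - t := by linarith
    have huN : u ≤ N := by omega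
    -- key: one term of the binomial expansion is ≤ 1
    have key : (N.choose j : ℝ) * (t ^ j * (1-t) ^ (N-j)) ≤ 1 := by
      have hexp : ∑ i ∈ Finset.range (N+1), t ^ i * (1-t) ^ (N-i) * (N.choose i : ℝ) = 1 := by
        have := add_pow t (1-t) N
        simp only [add_sub_cancel, one_pow] at this
        rw [← this]
      calc (N.choose j : ℝ) * (t ^ j * (1-t) ^ (N-j))
          = t ^ j * (1-t) ^ (N-j) * (N.choose j : ℝ) := by ring
        _ ≤ ∑ i ∈ Finset.range (N+1), t ^ i * (1-t) ^ (N-i) * (N.choose i : ℝ) := by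
            apply Finset.single_le_sum (f := fun i => t ^ i * (1-t) ^ (N-i) * (N.choose i : ℝ))
            · intro i _
              positivity
            · exact Finset.mem_range.mpr (by omega)
        _ = 1 := hexp
    have mono : t ^ u * (1-t) ^ (N-u) ≤ t ^ j * (1-t) ^ (N-j) := by
      have h1 : t ^ (u-j) ≤ (1-t) ^ (u-j) := pow_le_pow_left₀ ht0.le (by linarith) _
      have e1 : t ^ u = t ^ j * t ^ (u - j) := by
        rw [← pow_add, Nat.add_sub_cancel' hj]
      have e2 : (1-t) ^ (N - j) = (1-t) ^ (u-j) * (1-t) ^ (N-u) := by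
        rw [← pow_add]
        congr 1
        omega
      calc t ^ u * (1-t) ^ (N-u) = t ^ j * (t ^ (u-j) * (1-t) ^ (N-u)) := by
            rw [e1]; ring
        _ ≤ t ^ j * ((1-t) ^ (u-j) * (1-t) ^ (N-u)) := by
            refine mul_le_mul_of_nonneg_left ?_ (pow_nonneg ht0.le j)
            exact mul_le_mul_of_nonneg_right h1 (pow_nonneg h1t.le _)
        _ = t ^ j * (1-t) ^ (N-j) := by rw [e2]
    have key2 : (N.choose j : ℝ) * (t ^ u * (1-t) ^ (N-u)) ≤ 1 :=
      le_trans (mul_le_mul_of_nonneg_left mono (by positivity)) key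
    have hpos : (0:ℝ) < t ^ u * (1-t) ^ (N-u) := mul_pos (pow_pos ht0 _) (pow_pos h1t _)
    have hpow : (2:ℝ) ^ ((N:ℝ) * binEntropy2 t) = (t ^ u * (1-t) ^ (N-u))⁻¹ := by
      have hNt : (N:ℝ) * t = u := by rw [ht, mul_div_assoc']; exact mul_div_cancel_left₀ _ hNR.ne'
      have hN1t : (N:ℝ) * (1 - t) = ((N - u : ℕ) : ℝ) := by
        push_cast [huN]
        rw [mul_sub, hNt]; ring
      have hexp : (N:ℝ) * binEntropy2 t
          = (-(u:ℝ)) * Real.logb 2 t + (-((N-u:ℕ):ℝ)) * Real.logb 2 (1-t) := by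
        unfold binEntropy2
        rw [mul_sub, ← mul_assoc, ← mul_assoc]
        rw [show (N:ℝ) * -t = -((N:ℝ)*t) by ring, hNt, show (N:ℝ) * (1-t) = ((N-u:ℕ):ℝ) from hN1t]
        ring
      rw [hexp, Real.rpow_add (by norm_num)]
      rw [mul_comm (-(u:ℝ)) _, mul_comm (-((N-u:ℕ):ℝ)) _,
        Real.rpow_mul (by norm_num), Real.rpow_mul (by norm_num),
        Real.rpow_logb (by norm_num) (by norm_num) ht0,
        Real.rpow_logb (by norm_num) (by norm_num) h1t,
        Real.rpow_neg ht0.le, Real.rpow_neg h1t.le,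
        Real.rpow_natCast, Real.rpow_natCast, mul_inv]
    have hfin : (N.choose j:ℝ) ≤ 1 / (t ^ u * (1-t) ^ (N-u)) := (le_div_iff₀ hpos).mpr key2
    rw [hpow, ← one_div]
    exact hfin

lemma ball_symm (n : ℕ) (α : ℝ) (c c' : (Fin n → Bool) → Bool) :
    c' ∈ ball n c α ↔ c ∈ ball n c' α := by
  have h : (Finset.univ.filter (fun x : Fin n → Bool => c' x ≠ c x))
      = (Finset.univ.filter (fun x : Fin n → Bool => c x ≠ c' x)) := by
    apply Finset.filter_congr
    intro x _
    exact ne_comm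
  simp only [ball, Finset.mem_filter, Finset.mem_univ, true_and, h]

lemma sum_choose_le (N m k : ℕ) (hmk : m ≤ k) (hmkN : m + k ≤ N) :
    ∑ j ∈ Finset.range (m+1), (N.choose j : ℝ) ≤
      ((m:ℝ) + 1) * (2:ℝ) ^ ((N:ℝ) * binEntropy2 ((k:ℝ) / (N:ℝ))) := by
  have h2u : 2 * min k (N - k) ≤ N := by omega
  have hHu : binEntropy2 ((min k (N-k) : ℕ) / (N:ℝ)) = binEntropy2 ((k:ℝ)/(N:ℝ)) := by
    rcases le_total k (N - k) with h | h
    · rw [min_eq_left h]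
    · rw [min_eq_right h]
      rcases Nat.eq_zero_or_pos N with rfl | hNpos
      · have hk0 : k = 0 := by omega
        simp [hk0]
      · have hkN : k ≤ N := by omega
        have : ((N - k : ℕ) : ℝ) / (N:ℝ) = 1 - (k:ℝ)/(N:ℝ) := by
          push_cast [hkN]
          field_simp
        rw [this, binEntropy2_symm]
  have hterm : ∀ j ∈ Finset.range (m+1),
      (N.choose j : ℝ) ≤ (2:ℝ) ^ ((N:ℝ) * binEntropy2 ((k:ℝ)/(N:ℝ))) := by
    intro j hj
    rw [Finset.mem_range] at hj
    rw [← hHu]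
    exact choose_le_rpow N j (min k (N-k)) (by omega) h2u
  calc ∑ j ∈ Finset.range (m+1), (N.choose j : ℝ)
      ≤ ∑ _j ∈ Finset.range (m+1), (2:ℝ) ^ ((N:ℝ) * binEntropy2 ((k:ℝ)/(N:ℝ))) :=
        Finset.sum_le_sum hterm
    _ = ((m:ℝ)+1) * (2:ℝ) ^ ((N:ℝ) * binEntropy2 ((k:ℝ)/(N:ℝ))) := by
        rw [Finset.sum_const, Finset.card_range, nsmul_eq_mul]
        push_cast; ring

lemma ball_card_le (n : ℕ) (α : ℝ) (hα0 : 0 ≤ α) (hα1 : α < 1/2)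
    (c : (Fin n → Bool) → Bool) :
    ((ball n c α).card : ℝ) ≤
      ((⌈α * 2^n⌉₊ : ℝ) + 1) *
        (2:ℝ) ^ (((2:ℝ)^n) * binEntropy2 ((⌈α * 2^n⌉₊ : ℝ) / (2:ℝ)^n)) := by
  classical
  have hNcast : (((2^n : ℕ):ℝ)) = (2:ℝ)^n := by push_cast; ring
  have hαN : α * 2^n < ((2^n : ℕ):ℝ)/2 := by
    rw [hNcast]
    have : (0:ℝ) < (2:ℝ)^n := by positivity
    nlinarith
  have hαN0 : (0:ℝ) ≤ α * 2^n := by positivity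
  have hmk : ⌊α * 2^n⌋₊ ≤ ⌈α * 2^n⌉₊ := Nat.floor_le_ceil _
  have hmkN : ⌊α * 2^n⌋₊ + ⌈α * 2^n⌉₊ ≤ 2^n := by
    have h1 : (⌊α * 2^n⌋₊:ℝ) ≤ α * 2^n := Nat.floor_le hαN0
    have h2 : (⌈α * 2^n⌉₊:ℝ) < α * 2^n + 1 := Nat.ceil_lt_add_one hαN0
    have : ((⌊α * 2^n⌋₊ + ⌈α * 2^n⌉₊ : ℕ) : ℝ) < (((2^n : ℕ) + 1 : ℕ) : ℝ) := by
      push_cast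
      linarith
    exact_mod_cast Nat.lt_succ_iff.mp (by exact_mod_cast this)
  set f : ((Fin n → Bool) → Bool) → Finset (Fin n → Bool) :=
    fun c' => Finset.univ.filter (fun x => c' x ≠ c x) with hf
  have hinj : Set.InjOn f (ball n c α) := by
    intro c₁ h₁ c₂ h₂ hfe
    funext x
    have hx : (c₁ x ≠ c x) ↔ (c₂ x ≠ c x) := by
      constructor
      · intro h
        have : x ∈ f c₂ := hfe ▸ (Finset.mem_filter.mpr ⟨Finset.mem_univ _, h⟩)
        exact (Finset.mem_filter.mp this).2
      · intro h
        have : x ∈ f c₁ := hfe ▸ (Finset.mem_filter.mpr ⟨Finset.mem_univ _, h⟩)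
        exact (Finset.mem_filter.mp this).2
    cases hb1 : c₁ x <;> cases hb2 : c₂ x <;> cases hb3 : c x <;> simp_all
  have himg : (ball n c α).image f ⊆
      (Finset.range (⌊α * 2^n⌋₊ + 1)).biUnion (fun j => Finset.powersetCard j Finset.univ) := by
    intro A hA
    obtain ⟨c', hc', rfl⟩ := Finset.mem_image.mp hA
    have hcard : (f c').card ≤ ⌊α * 2^n⌋₊ := by
      apply Nat.le_floor
      exact (Finset.mem_filter.mp hc').2
    exact Finset.mem_biUnion.mpr ⟨(f c').card, Finset.mem_range.mpr (by omega),
      Finset.mem_powersetCard.mpr ⟨Finset.subset_univ _, rfl⟩⟩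
  have hcardle : (ball n c α).card ≤ ∑ j ∈ Finset.range (⌊α * 2^n⌋₊ + 1), (2^n : ℕ).choose j := by
    calc (ball n c α).card = ((ball n c α).image f).card :=
          (Finset.card_image_of_injOn hinj).symm
      _ ≤ ((Finset.range (⌊α * 2^n⌋₊+1)).biUnion (fun j => Finset.powersetCard j Finset.univ)).card :=
          Finset.card_le_card himg
      _ ≤ ∑ j ∈ Finset.range (⌊α * 2^n⌋₊+1),
            (Finset.powersetCard j (Finset.univ : Finset (Fin n → Bool))).card :=
          Finset.card_biUnion_le
      _ = ∑ j ∈ Finset.range (⌊α * 2^n⌋₊+1), (2^n : ℕ).choose j := by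
          apply Finset.sum_congr rfl
          intro j _
          rw [Finset.card_powersetCard, Finset.card_univ]
          congr 1
          simp [Fintype.card_fun]
  have hmain := sum_choose_le (2^n) ⌊α * 2^n⌋₊ ⌈α * 2^n⌉₊ hmk hmkN
  have hle1 : ((ball n c α).card : ℝ) ≤ ∑ j ∈ Finset.range (⌊α * 2^n⌋₊+1), ((2^n:ℕ).choose j : ℝ) := by
    calc ((ball n c α).card : ℝ)
        ≤ ((∑ j ∈ Finset.range (⌊α * 2^n⌋₊+1), (2^n:ℕ).choose j : ℕ) : ℝ) := by exact_mod_cast hcardle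
      _ = _ := by push_cast; ring
  have hmlek : ((⌊α * 2^n⌋₊:ℝ)) ≤ (⌈α * 2^n⌉₊:ℝ) := by exact_mod_cast hmk
  have hp : (0:ℝ) ≤ (2:ℝ) ^ (((2^n:ℕ):ℝ) * binEntropy2 ((⌈α * 2^n⌉₊:ℝ) / ((2^n:ℕ):ℝ))) :=
    Real.rpow_nonneg (by norm_num) _
  have := le_trans hle1 hmain
  rw [hNcast] at this hp
  nlinarith
lemma pmf_sum_one {β : Type*} [Fintype β] (q : PMF β) :
    ∑ b : β, (q b).toReal = 1 := by
  have h := q.tsum_coe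
  rw [tsum_fintype] at h
  have hne : ∀ b ∈ Finset.univ, q b ≠ ⊤ := by
    intro b _
    exact (q.apply_lt_top b).ne
  rw [← ENNReal.toReal_sum hne, h, ENNReal.toReal_one]

lemma fiber_bound (n : ℕ) (α : ℝ) (hα0 : 0 ≤ α) (hα1 : α < 1/2)
    (q : PMF ((Fin n → Bool) → Bool)) (s : Finset ((Fin n → Bool) → Bool)) :
    ∑ c ∈ s, ∑ c' ∈ ball n c α, (q c').toReal ≤
      ((⌈α * 2^n⌉₊ : ℝ) + 1) *
        (2:ℝ) ^ (((2:ℝ)^n) * binEntropy2 ((⌈α * 2^n⌉₊ : ℝ) / (2:ℝ)^n)) := by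
  classical
  set B : ℝ := ((⌈α * 2^n⌉₊ : ℝ) + 1) *
        (2:ℝ) ^ (((2:ℝ)^n) * binEntropy2 ((⌈α * 2^n⌉₊ : ℝ) / (2:ℝ)^n)) with hB
  calc ∑ c ∈ s, ∑ c' ∈ ball n c α, (q c').toReal
      = ∑ c ∈ s, ∑ c' : (Fin n → Bool) → Bool,
          if c' ∈ ball n c α then (q c').toReal else 0 := by
        refine Finset.sum_congr rfl fun c _ => ?_
        rw [Finset.sum_ite_mem, Finset.univ_inter]
    _ = ∑ c' : (Fin n → Bool) → Bool, ∑ c ∈ s,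
          if c' ∈ ball n c α then (q c').toReal else 0 := Finset.sum_comm
    _ ≤ ∑ c' : (Fin n → Bool) → Bool, ((ball n c' α).card : ℝ) * (q c').toReal := by
        refine Finset.sum_le_sum fun c' _ => ?_
        have hrw : ∀ c ∈ s, (if c' ∈ ball n c α then (q c').toReal else 0)
            = if c ∈ ball n c' α then (q c').toReal else 0 := by
          intro c _
          simp only [ball_symm n α c c']
        rw [Finset.sum_congr rfl hrw]
        calc ∑ c ∈ s, (if c ∈ ball n c' α then (q c').toReal else 0)
            ≤ ∑ c : (Fin n → Bool) → Bool,
                (if c ∈ ball n c' α then (q c').toReal else 0) := by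
              refine Finset.sum_le_sum_of_subset_of_nonneg (Finset.subset_univ s) ?_
              intro c _ _
              split
              exacts [ENNReal.toReal_nonneg, le_refl 0]
          _ = ((ball n c' α).card : ℝ) * (q c').toReal := by
              rw [Finset.sum_ite_mem, Finset.univ_inter, Finset.sum_const, nsmul_eq_mul]
    _ ≤ ∑ c' : (Fin n → Bool) → Bool, B * (q c').toReal := by
        refine Finset.sum_le_sum fun c' _ => ?_
        exact mul_le_mul_of_nonneg_right (ball_card_le n α hα0 hα1 c') ENNReal.toReal_nonneg
    _ = B * ∑ c' : (Fin n → Bool) → Bool, (q c').toReal := by rw [← Finset.mul_sum]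
    _ = B := by rw [pmf_sum_one, mul_one]

set_option maxHeartbeats 2000000 in
/-- For `α ∈ [0, 1/2)` and every randomized estimator `W`,
`P(W(T^c_p) ∈ B(c, α)) ≤ (⌈α·2^n⌉ + 1) · 2^{2^n (H(⌈α·2^n⌉/2^n) - 1) + p}`. -/
theorem stmt7 (n p : ℕ) (α : ℝ) (hα0 : 0 ≤ α) (hα1 : α < 1 / 2)
    (W : (Fin p → ((Fin n → Bool) × Bool)) → PMF ((Fin n → Bool) → Bool)) :
    probEstimator n p α W ≤
      ((⌈α * 2 ^ n⌉₊ : ℝ) + 1) *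
        (2 : ℝ) ^ ((2 : ℝ) ^ n *
          (binEntropy2 ((⌈α * 2 ^ n⌉₊ : ℝ) / (2 : ℝ) ^ n) - 1) + (p : ℝ)) := by
  classical
  set B : ℝ := ((⌈α * 2^n⌉₊ : ℝ) + 1) *
        (2:ℝ) ^ (((2:ℝ)^n) * binEntropy2 ((⌈α * 2^n⌉₊ : ℝ) / (2:ℝ)^n)) with hB
  have hBnn : 0 ≤ B := by
    apply mul_nonneg
    · positivity
    · exact Real.rpow_nonneg (by norm_num) _
  -- bound the numerator for each fixed x
  have hA : ∀ x : Fin p → (Fin n → Bool),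
      ∑ c : (Fin n → Bool) → Bool, ∑ c' ∈ ball n c α, ((W (trainSet n p c x)) c').toReal
      ≤ (2:ℝ)^p * B := by
    intro x
    have hv : ∀ (s : Finset ((Fin n → Bool) → Bool)) (v : Fin p → Bool),
        (∀ c ∈ s, ∀ i, c (x i) = v i) →
        ∑ c ∈ s, ∑ c' ∈ ball n c α, ((W (trainSet n p c x)) c').toReal ≤ B := by
      intro s v hs
      have hrw : ∀ c ∈ s, ∑ c' ∈ ball n c α, ((W (trainSet n p c x)) c').toReal
          = ∑ c' ∈ ball n c α, ((W (fun i => (x i, v i))) c').toReal := by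
        intro c hc
        have hcv : trainSet n p c x = fun i => (x i, v i) := by
          funext i
          simp [trainSet, hs c hc i]
        rw [hcv]
      rw [Finset.sum_congr rfl hrw]
      exact fiber_bound n α hα0 hα1 (W (fun i => (x i, v i))) _
    rw [← Finset.sum_fiberwise Finset.univ (fun c (i : Fin p) => c (x i))
        (fun c => ∑ c' ∈ ball n c α, ((W (trainSet n p c x)) c').toReal)]
    have hstep : ∀ v : Fin p → Bool,
        ∑ c ∈ Finset.univ.filter (fun c : (Fin n → Bool) → Bool => (fun i => c (x i)) = v),
          ∑ c' ∈ ball n c α, ((W (trainSet n p c x)) c').toReal ≤ B :=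
      fun v => hv _ v (fun c hc i => congrFun (Finset.mem_filter.mp hc).2 i)
    calc (∑ v : Fin p → Bool, ∑ c ∈ Finset.univ.filter
            (fun c : (Fin n → Bool) → Bool => (fun i => c (x i)) = v),
          ∑ c' ∈ ball n c α, ((W (trainSet n p c x)) c').toReal)
        ≤ ∑ _v : Fin p → Bool, B := Finset.sum_le_sum fun v _ => hstep v
      _ = (2:ℝ)^p * B := by
          rw [Finset.sum_const, nsmul_eq_mul, Finset.card_univ]
          congr 1
          simp [Fintype.card_fun]
  -- numerator bound
  have hnum : ∑ c : (Fin n → Bool) → Bool, ∑ x : Fin p → (Fin n → Bool),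
      ∑ c' ∈ ball n c α, ((W (trainSet n p c x)) c').toReal
      ≤ ((2:ℝ)^n)^p * ((2:ℝ)^p * B) := by
    rw [Finset.sum_comm]
    calc ∑ x : Fin p → (Fin n → Bool), ∑ c : (Fin n → Bool) → Bool,
          ∑ c' ∈ ball n c α, ((W (trainSet n p c x)) c').toReal
        ≤ ∑ _x : Fin p → (Fin n → Bool), (2:ℝ)^p * B := Finset.sum_le_sum fun x _ => hA x
      _ = ((2:ℝ)^n)^p * ((2:ℝ)^p * B) := by
          rw [Finset.sum_const, nsmul_eq_mul, Finset.card_univ]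
          congr 1
          simp [Fintype.card_fun]
  -- denominator
  have hD1 : ((Fintype.card ((Fin n → Bool) → Bool)) : ℝ) = (2:ℝ) ^ ((2:ℕ)^n) := by
    rw [Fintype.card_fun]
    push_cast
    simp [Fintype.card_fun]
  have hD2 : ((Fintype.card (Fin n → Bool)) : ℝ) = (2:ℝ)^n := by
    rw [Fintype.card_fun]
    push_cast
    simp
  have hDpos : (0:ℝ) < ((Fintype.card ((Fin n → Bool) → Bool) : ℝ) * (Fintype.card (Fin n → Bool) : ℝ) ^ p) := by
    rw [hD1, hD2]
    positivity
  rw [probEstimator, div_le_iff₀ hDpos]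
  -- RHS arithmetic
  have hrpow : (2 : ℝ) ^ ((2 : ℝ) ^ n *
          (binEntropy2 ((⌈α * 2 ^ n⌉₊ : ℝ) / (2 : ℝ) ^ n) - 1) + (p : ℝ))
      = (2:ℝ) ^ (((2:ℝ)^n) * binEntropy2 ((⌈α * 2^n⌉₊ : ℝ) / (2:ℝ)^n))
        * ((2:ℝ) ^ ((2:ℕ)^n))⁻¹ * (2:ℝ)^p := by
    rw [mul_sub, mul_one, sub_add_eq_add_sub, Real.rpow_sub (by norm_num),
      Real.rpow_add (by norm_num), Real.rpow_natCast]
    have h1 : (2:ℝ) ^ ((2:ℝ)^n) = (2:ℝ) ^ ((2:ℕ)^n : ℕ) := by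
      rw [← Real.rpow_natCast 2 ((2:ℕ)^n)]
      congr 1
      push_cast
      ring
    rw [h1]
    ring
  calc ∑ c : (Fin n → Bool) → Bool, ∑ x : Fin p → (Fin n → Bool),
      ∑ c' ∈ ball n c α, ((W (trainSet n p c x)) c').toReal
      ≤ ((2:ℝ)^n)^p * ((2:ℝ)^p * B) := hnum
    _ = ((⌈α * 2 ^ n⌉₊ : ℝ) + 1) *
        (2 : ℝ) ^ ((2 : ℝ) ^ n *
          (binEntropy2 ((⌈α * 2 ^ n⌉₊ : ℝ) / (2 : ℝ) ^ n) - 1) + (p : ℝ)) *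
        ((Fintype.card ((Fin n → Bool) → Bool) : ℝ) * (Fintype.card (Fin n → Bool) : ℝ) ^ p) := by
        rw [hrpow, hD1, hD2, hB]
        have hpow2 : (0:ℝ) < (2:ℝ) ^ ((2:ℕ)^n) := by positivity
        field_simp
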